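/- arXiv:2207.02819 — 5 statements merged into one kernel-verified Lean document; each statement's English description precedes it below -/
import Mathlib

section
/- For X ~ Poisson(λ), there exists an absolute constant C > 0 (independent of λ) such that Var[X·1(X ≥ 4)] ≤ C·E[X·1(X ≥ 4)]. -/
open ProbabilityTheory
open scoped NNReal

/-- Expectation of `f X` for `X ~ Poisson(r)`. -/
noncomputable def pev (r : ℝ≥0) (f : ℕ → ℝ) : ℝ :=
  ∑' x : ℕ, f x * poissonPMFReal r x

/-- Variance of `f X` for `X ~ Poisson(r)`. -/
noncomputable def pvar (r : ℝ≥0) (f : ℕ → ℝ) : ℝ :=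
  pev r (fun x => f x ^ 2) - (pev r f) ^ 2

/-- The function `x ↦ x √(min(x,a) min(x,b)) 1(x ≥ 4)`. -/
noncomputable def fab (a b : ℝ) (x : ℕ) : ℝ :=
  if 4 ≤ x then (x : ℝ) * Real.sqrt (min (x : ℝ) a * min (x : ℝ) b) else 0

namespace Stmt1Aux

variable (r : ℝ≥0)

local notation "p" => poissonPMFReal r

lemma pnn (n : ℕ) : 0 ≤ p n := poissonPMFReal_nonneg

lemma shift (n : ℕ) : ((n:ℝ)+1) * p (n+1) = r * p n := by
  unfold poissonPMFReal
  rw [Nat.factorial_succ]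
  have h : (n.factorial : ℝ) ≠ 0 := Nat.cast_ne_zero.2 n.factorial_ne_zero
  push_cast
  field_simp
  ring

lemma sp : Summable p := (poissonPMFRealSum r).summable

lemma tsum_p : ∑' n, p n = 1 := (poissonPMFRealSum r).tsum_eq

lemma snp : Summable (fun n : ℕ => (n:ℝ) * p n) := by
  apply (summable_nat_add_iff 1).mp
  have : (fun n : ℕ => ((n+1 : ℕ):ℝ) * p (n+1)) = fun n : ℕ => (r:ℝ) * p n := by
    funext n; push_cast; exact shift r n
  rw [this]
  exact (sp r).mul_left _

lemma sn2p : Summable (fun n : ℕ => (n:ℝ)^2 * p n) := by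
  apply (summable_nat_add_iff 1).mp
  have : (fun n : ℕ => ((n+1 : ℕ):ℝ)^2 * p (n+1)) =
      fun n : ℕ => (r:ℝ) * ((n:ℝ) * p n) + (r:ℝ) * p n := by
    funext n
    have h := shift r n
    push_cast
    nlinarith [h]
  rw [this]
  exact ((snp r).mul_left _).add ((sp r).mul_left _)

lemma sind (k : ℕ) : Summable (fun n : ℕ => (if k ≤ n then (1:ℝ) else 0) * p n) := by
  refine Summable.of_nonneg_of_le (fun n => ?_) (fun n => ?_) (sp r) <;>
    · have := pnn r n; split <;> simp [this]

noncomputable def T (k : ℕ) : ℝ := ∑' n, (if k ≤ n then (1:ℝ) else 0) * p n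

lemma sindn (k : ℕ) : Summable (fun n : ℕ => (if k ≤ n then (n:ℝ) else 0) * p n) := by
  refine Summable.of_nonneg_of_le (fun n => ?_) (fun n => ?_) (snp r)
  · have h := pnn r n; split
    · exact mul_nonneg (Nat.cast_nonneg n) h
    · simp
  · have h := pnn r n; split
    · exact le_rfl
    · rw [zero_mul]; exact mul_nonneg (Nat.cast_nonneg n) h

lemma sindn2 : Summable (fun n : ℕ => (if 4 ≤ n then (n:ℝ)^2 else 0) * p n) := by
  refine Summable.of_nonneg_of_le (fun n => ?_) (fun n => ?_) (sn2p r)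
  · have h := pnn r n; split
    · exact mul_nonneg (by positivity) h
    · simp
  · have h := pnn r n; split
    · exact le_rfl
    · rw [zero_mul]; exact mul_nonneg (by positivity) h

lemma stepT (k : ℕ) :
    ∑' n, (if k+1 ≤ n then (n:ℝ) else 0) * p n = r * T r k := by
  rw [Summable.tsum_eq_zero_add (sindn r (k+1))]
  have h0 : (if k+1 ≤ 0 then ((0:ℕ):ℝ) else 0) * p 0 = 0 := by
    simp
  rw [h0, zero_add]
  have he : ∀ n : ℕ, (if k+1 ≤ n+1 then ((n+1:ℕ):ℝ) else 0) * p (n+1)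
      = (r:ℝ) * ((if k ≤ n then (1:ℝ) else 0) * p n) := by
    intro n
    by_cases h : k ≤ n
    · rw [if_pos (by omega), if_pos h]
      push_cast
      rw [shift r n]; ring
    · rw [if_neg (by omega), if_neg h]; ring
  simp only [he]
  rw [tsum_mul_left]
  rfl

lemma step2 :
    ∑' n : ℕ, (if 4 ≤ n then (n:ℝ)^2 else 0) * p n
      = r * ((∑' n : ℕ, (if 3 ≤ n then (n:ℝ) else 0) * p n) + T r 3) := by
  rw [Summable.tsum_eq_zero_add (sindn2 r)]
  have h0 : (if 4 ≤ 0 then ((0:ℕ):ℝ)^2 else 0) * p 0 = 0 := by simp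
  rw [h0, zero_add]
  have he : ∀ n : ℕ, (if 4 ≤ n+1 then ((n+1:ℕ):ℝ)^2 else 0) * p (n+1)
      = (r:ℝ) * ((if 3 ≤ n then (n:ℝ) else 0) * p n + (if 3 ≤ n then (1:ℝ) else 0) * p n) := by
    intro n
    by_cases h : 3 ≤ n
    · rw [if_pos (by omega), if_pos h, if_pos h]
      have hs := shift r n
      push_cast
      nlinarith [hs]
    · rw [if_neg (by omega), if_neg h, if_neg h]; ring
  simp only [he]
  rw [tsum_mul_left, Summable.tsum_add (sindn r 3) (sind r 3)]
  rfl

lemma T_nonneg (k : ℕ) : 0 ≤ T r k := by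
  apply tsum_nonneg
  intro n; have := pnn r n; split <;> simp [this]

lemma T_le_one (k : ℕ) : T r k ≤ 1 := by
  rw [← tsum_p r]
  apply Summable.tsum_le_tsum _ (sind r k) (sp r)
  intro n; have := pnn r n; split <;> simp [this]

lemma T2_eq : T r 2 = p 2 + T r 3 := by
  have he : ∀ n : ℕ, (if 2 ≤ n then (1:ℝ) else 0) * p n
      = (if n = 2 then p 2 else 0) + (if 3 ≤ n then (1:ℝ) else 0) * p n := by
    intro n
    rcases Nat.lt_or_ge n 2 with h | h
    · rw [if_neg (by omega), if_neg (by omega), if_neg (by omega)]; ring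
    rcases Nat.eq_or_lt_of_le h with h2 | h2
    · subst h2; norm_num
    · rw [if_pos h, if_neg (by omega), if_pos (by omega)]; ring
  unfold T
  simp only [he]
  rw [Summable.tsum_add _ (sind r 3), tsum_ite_eq]
  exact ⟨p 2, hasSum_ite_eq 2 (p 2)⟩

lemma one_sub_T3 : 1 - T r 3 = p 0 + p 1 + p 2 := by
  have h : 1 - T r 3 = ∑' n, (p n - (if 3 ≤ n then (1:ℝ) else 0) * p n) := by
    rw [Summable.tsum_sub (sp r) (sind r 3), tsum_p]; rfl
  rw [h]
  have he : ∀ n : ℕ, p n - (if 3 ≤ n then (1:ℝ) else 0) * p n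
      = (if n ∈ ({0,1,2} : Finset ℕ) then p n else 0) := by
    intro n
    by_cases h3 : 3 ≤ n
    · rw [if_pos h3, if_neg (by simp; omega)]; ring
    · rw [if_neg h3, if_pos (by simp; omega)]; ring
  simp only [he]
  rw [tsum_eq_sum (s := {0,1,2}) (by intro b hb; rw [if_neg hb])]
  simp
  ring

lemma p3_le_T3 : p 3 ≤ T r 3 := by
  unfold T
  have := Summable.le_tsum (sind r 3) 3 (fun n _ => by have := pnn r n; split <;> simp [this])
  simpa using this

lemma rsqp2 : (r:ℝ)^2 * p 2 = 3 * (r * p 3) := by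
  unfold poissonPMFReal
  norm_num [Nat.factorial]
  ring

lemma expbound : (r:ℝ) * (p 0 + p 1 + p 2) ≤ 6 := by
  unfold poissonPMFReal
  have h0 : (0:ℝ) ≤ r := r.coe_nonneg
  have e1 : (r:ℝ)^1 / (Nat.factorial 1) ≤ Real.exp r := Real.pow_div_factorial_le_exp (r:ℝ) h0 1
  have e2 : (r:ℝ)^2 / (Nat.factorial 2) ≤ Real.exp r := Real.pow_div_factorial_le_exp (r:ℝ) h0 2
  have e3 : (r:ℝ)^3 / (Nat.factorial 3) ≤ Real.exp r := Real.pow_div_factorial_le_exp (r:ℝ) h0 3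
  have hp : 0 < Real.exp (-(r:ℝ)) := Real.exp_pos _
  have hi : Real.exp (-(r:ℝ)) * Real.exp (r:ℝ) = 1 := by
    rw [← Real.exp_add]; simp
  norm_num [Nat.factorial] at e1 e2 e3 ⊢
  nlinarith [hp, hi, e1, e2, e3]

end Stmt1Aux

open Stmt1Aux in
theorem stmt_1 :
    ∃ C : ℝ, 0 < C ∧ ∀ r : ℝ≥0,
      pvar r (fun x => if 4 ≤ x then (x : ℝ) else 0) ≤
        C * pev r (fun x => if 4 ≤ x then (x : ℝ) else 0) := by
  refine ⟨10, by norm_num, fun r => ?_⟩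
  have hE : pev r (fun x => if 4 ≤ x then (x : ℝ) else 0) = r * T r 3 := by
    unfold pev
    simpa using stepT r 3
  have hE2 : pev r (fun x => (if 4 ≤ x then (x : ℝ) else 0) ^ 2)
      = r * (r * T r 2 + T r 3) := by
    unfold pev
    have he : ∀ x : ℕ, ((if 4 ≤ x then (x:ℝ) else 0) ^ 2) * poissonPMFReal r x
        = (if 4 ≤ x then (x:ℝ)^2 else 0) * poissonPMFReal r x := by
      intro x; split <;> ring
    simp only [he]
    rw [step2 r, stepT r 2]
  have hvar : pvar r (fun x => if 4 ≤ x then (x : ℝ) else 0)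
      = r * (r * T r 2 + T r 3) - (r * T r 3)^2 := by
    unfold pvar
    rw [hE, ← hE2]
  rw [hvar, hE]
  have h2 := T2_eq r
  have h3 := one_sub_T3 r
  have h4 := p3_le_T3 r
  have h5 := rsqp2 r
  have h6 := expbound r
  have h7 := T_nonneg r 3
  have h8 := T_le_one r 3
  have hr : (0:ℝ) ≤ r := r.coe_nonneg
  have hp2 : 0 ≤ poissonPMFReal r 2 := pnn r 2
  have key : (r:ℝ) * T r 3 * ((r:ℝ) * (poissonPMFReal r 0 + poissonPMFReal r 1 + poissonPMFReal r 2))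
      ≤ (r:ℝ) * T r 3 * 6 :=
    mul_le_mul_of_nonneg_left h6 (mul_nonneg hr h7)
  have e1 : (r:ℝ)^2 * T r 3 - (r:ℝ)^2 * (T r 3)^2
      = ((r:ℝ) * T r 3) * ((r:ℝ) * (poissonPMFReal r 0 + poissonPMFReal r 1 + poissonPMFReal r 2)) := by
    rw [← h3]; ring
  have e2 : (r:ℝ) * poissonPMFReal r 3 ≤ (r:ℝ) * T r 3 :=
    mul_le_mul_of_nonneg_left h4 hr
  nlinarith [key, e1, e2, h5, h2, mul_nonneg hr h7]
end

section
/- For real numbers x, y, a, b with 4 ≤ x ≤ a and a < y ≤ b, the inequality (x^2 - y·√(ay))^2 ≤ 4ab·(y - x)^2 holds. -/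
theorem stmt_4 (x y a b : ℝ) (h1 : 4 ≤ x) (h2 : x ≤ a) (h3 : a < y) (h4 : y ≤ b) :
    (x ^ 2 - y * Real.sqrt (a * y)) ^ 2 ≤ 4 * a * b * (y - x) ^ 2 := by
  have ha : (0:ℝ) < a := by linarith
  have hy : (0:ℝ) < y := by linarith
  set s := Real.sqrt (a * y) with hsdef
  set t := Real.sqrt (a * b) with htdef
  have hs0 : 0 ≤ s := Real.sqrt_nonneg _
  have ht0 : 0 ≤ t := Real.sqrt_nonneg _
  have hs2 : s ^ 2 = a * y := Real.sq_sqrt (by positivity)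
  have ht2 : t ^ 2 = a * b := Real.sq_sqrt (mul_nonneg ha.le (by linarith))
  have hsa : a ≤ s := by nlinarith
  have hsy : s ≤ y := by nlinarith
  have hst : s ≤ t := Real.sqrt_le_sqrt (by nlinarith)
  have hxs : x ≤ s := le_trans h2 hsa
  have h0 : x ^ 2 ≤ y * s := by nlinarith
  have hkey : y * s - x ^ 2 ≤ 2 * t * (y - x) := by nlinarith [sq_nonneg (s - x)]
  nlinarith [sq_nonneg (s - x), mul_nonneg ht0 (sub_nonneg.mpr (le_trans h2 h3.le)), sq_nonneg (2 * t * (y - x) - (y * s - x ^ 2))]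
end

section
/- For real numbers x, y, a, b with 4 ≤ x ≤ a ≤ b < y, the inequality (x^2 - y·√(ab))^2 ≤ (x + √(ab))^2·(y - x)^2 ≤ 4ab·(y - x)^2 holds. -/
theorem stmt_5 (x y a b : ℝ) (h1 : 4 ≤ x) (h2 : x ≤ a) (h3 : a ≤ b) (h4 : b < y) :
    (x ^ 2 - y * Real.sqrt (a * b)) ^ 2 ≤ (x + Real.sqrt (a * b)) ^ 2 * (y - x) ^ 2 ∧
    (x + Real.sqrt (a * b)) ^ 2 * (y - x) ^ 2 ≤ 4 * a * b * (y - x) ^ 2 := by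
  set s := Real.sqrt (a * b) with hs
  have hx : (0:ℝ) < x := by linarith
  have hab : (0:ℝ) ≤ a * b := by nlinarith
  have hs0 : 0 ≤ s := Real.sqrt_nonneg _
  have hs2 : s ^ 2 = a * b := Real.sq_sqrt hab
  have hsx : x ≤ s := by nlinarith [hs2]
  have hsb : s ≤ b := by nlinarith [hs2]
  have hA : 0 ≤ x ^ 2 - y * s + (x + s) * (y - x) := by nlinarith
  have hB : 0 ≤ (x + s) * (y - x) - (x ^ 2 - y * s) := by nlinarith
  constructor
  · nlinarith [mul_nonneg hA hB]
  · nlinarith [mul_nonneg (mul_nonneg (by linarith : (0:ℝ) ≤ s - x)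
      (by linarith : (0:ℝ) ≤ 3 * s + x)) (sq_nonneg (y - x))]
end

section
/- For real numbers x, y, a, b with a < x ≤ b < y and a ≥ 0, the inequality (x√x - y√b)^2 ≤ 4b·(y - x)^2 holds. -/
theorem stmt_8 (x y a b : ℝ) (h0 : 0 ≤ a) (h1 : a < x) (h2 : x ≤ b) (h3 : b < y) :
    (x * Real.sqrt x - y * Real.sqrt b) ^ 2 ≤ 4 * b * (y - x) ^ 2 := by
  have hx : 0 ≤ x := le_trans h0 h1.le
  have hb : 0 ≤ b := le_trans hx h2
  set t := Real.sqrt x with ht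
  set s := Real.sqrt b with hs
  have ht2 : t ^ 2 = x := Real.sq_sqrt hx
  have hs2 : s ^ 2 = b := Real.sq_sqrt hb
  have hts : t ≤ s := Real.sqrt_le_sqrt h2
  have ht0 : 0 ≤ t := Real.sqrt_nonneg x
  have hs0 : 0 ≤ s := Real.sqrt_nonneg b
  -- key: t^3 - 2 t^2 s + s^3 = (t - s)(t^2 - s t - s^2) ≥ 0
  have key : 0 ≤ t ^ 3 - 2 * t ^ 2 * s + s ^ 3 := by
    nlinarith [mul_nonneg (sub_nonneg.2 hts) (mul_nonneg (sub_nonneg.2 hts) hs0),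
      mul_nonneg ht0 hs0, sq_nonneg (t - s), mul_nonneg (sub_nonneg.2 hts) ht0]
  have hy : s ^ 2 ≤ y := by nlinarith
  have hA : 0 ≤ y * s - t ^ 3 := by
    nlinarith [mul_nonneg (sub_nonneg.2 hy) hs0,
      mul_nonneg (sub_nonneg.2 hts) (mul_nonneg hs0 hs0),
      mul_nonneg (sub_nonneg.2 hts) (mul_nonneg ht0 hs0),
      mul_nonneg (sub_nonneg.2 hts) (mul_nonneg ht0 ht0)]
  have hB : y * s - t ^ 3 ≤ 2 * s * (y - t ^ 2) := by
    nlinarith [mul_nonneg (sub_nonneg.2 hy) hs0, key]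
  have h4 : (y * s - t ^ 3) ^ 2 ≤ (2 * s * (y - t ^ 2)) ^ 2 := by
    apply sq_le_sq' _ hB
    nlinarith [mul_nonneg (sub_nonneg.2 hy) hs0]
  calc (x * t - y * s) ^ 2 = (y * s - t ^ 3) ^ 2 := by rw [← ht2]; ring
    _ ≤ (2 * s * (y - t ^ 2)) ^ 2 := h4
    _ = 4 * b * (y - x) ^ 2 := by rw [← ht2, ← hs2]; ring
end

section
/- For X ~ Poisson(λ) with λ < 1 and real numbers b ≥ a ≥ 2, E[(X·√(min(X,a)·min(X,b)))^2·1(X ≥ 4)] ≤ C·√(ab)·(λ^4 + E[X·√(min(X,a)·min(X,b))·1(X ≥ 4)]) for some absolute constant C. -/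
open ProbabilityTheory
open scoped NNReal

lemma cube_le_three_pow (n : ℕ) : n ^ 3 ≤ 3 ^ n := by
  induction n with
  | zero => decide
  | succ k ih =>
    rcases Nat.lt_or_ge k 3 with h | h
    · interval_cases k <;> decide
    · have h1 : (k + 1) ^ 3 ≤ 3 * k ^ 3 := by
        zify
        nlinarith [(by exact_mod_cast h : (3:ℤ) ≤ (k:ℤ)), sq_nonneg ((k:ℤ) - 3),
          mul_nonneg (mul_nonneg (by linarith [(by exact_mod_cast h : (3:ℤ) ≤ (k:ℤ))] : (0:ℤ) ≤ (k:ℤ) - 3) (by positivity : (0:ℤ) ≤ (k:ℤ))) (by positivity : (0:ℤ) ≤ (k:ℤ))]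
      calc (k + 1) ^ 3 ≤ 3 * k ^ 3 := h1
        _ ≤ 3 * 3 ^ k := Nat.mul_le_mul_left 3 ih
        _ = 3 ^ (k + 1) := by ring

lemma fab_nonneg (a b : ℝ) (x : ℕ) : 0 ≤ fab a b x := by
  unfold fab
  split
  · positivity
  · exact le_refl 0

theorem stmt_10 :
    ∃ C : ℝ, 0 < C ∧ ∀ (r : ℝ≥0), (r : ℝ) < 1 → ∀ a b : ℝ, 2 ≤ a → a ≤ b →
      pev r (fun x => (fab a b x) ^ 2) ≤
        C * Real.sqrt (a * b) * ((r : ℝ) ^ 4 + pev r (fab a b)) := by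
  have hT : Summable (fun n : ℕ => (3:ℝ) ^ n / Nat.factorial n) := Real.summable_pow_div_factorial 3
  set T : ℝ := ∑' n : ℕ, (3:ℝ) ^ n / Nat.factorial n with hTdef
  have hT0 : 0 ≤ T := tsum_nonneg (fun n => by positivity)
  refine ⟨T + 1, by linarith, ?_⟩
  intro r hr a b ha hab
  have ha0 : (0:ℝ) ≤ a := by linarith
  have hb0 : (0:ℝ) ≤ b := by linarith
  have hs0 : 0 ≤ Real.sqrt (a * b) := Real.sqrt_nonneg _
  have hr0 : (0:ℝ) ≤ (r:ℝ) := r.coe_nonneg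
  have hr4 : (0:ℝ) ≤ (r:ℝ) ^ 4 := by positivity
  -- termwise bound
  have key : ∀ x : ℕ, fab a b x ^ 2 * poissonPMFReal r x ≤
      Real.sqrt (a * b) * (r:ℝ) ^ 4 * ((3:ℝ) ^ x / Nat.factorial x) := by
    intro x
    by_cases hx : 4 ≤ x
    · have hX0 : (0:ℝ) ≤ (x:ℝ) := Nat.cast_nonneg x
      have hma : (0:ℝ) ≤ min (x:ℝ) a := le_min hX0 ha0
      have hmb : (0:ℝ) ≤ min (x:ℝ) b := le_min hX0 hb0
      have hm0 : (0:ℝ) ≤ min (x:ℝ) a * min (x:ℝ) b := mul_nonneg hma hmb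
      have hfab : fab a b x = (x:ℝ) * Real.sqrt (min (x:ℝ) a * min (x:ℝ) b) := by
        simp [fab, hx]
      have hsq : Real.sqrt (min (x:ℝ) a * min (x:ℝ) b) ^ 2 = min (x:ℝ) a * min (x:ℝ) b :=
        Real.sq_sqrt hm0
      have b1 : Real.sqrt (min (x:ℝ) a * min (x:ℝ) b) ≤ Real.sqrt (a * b) := by
        apply Real.sqrt_le_sqrt
        exact mul_le_mul (min_le_right _ _) (min_le_right _ _) hmb ha0
      have b2 : Real.sqrt (min (x:ℝ) a * min (x:ℝ) b) ≤ (x:ℝ) := by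
        have h2 : min (x:ℝ) a * min (x:ℝ) b ≤ (x:ℝ) * (x:ℝ) :=
          mul_le_mul (min_le_left _ _) (min_le_left _ _) hmb hX0
        calc Real.sqrt (min (x:ℝ) a * min (x:ℝ) b) ≤ Real.sqrt ((x:ℝ) * (x:ℝ)) :=
              Real.sqrt_le_sqrt h2
          _ = (x:ℝ) := Real.sqrt_mul_self hX0
      have hmbound : min (x:ℝ) a * min (x:ℝ) b ≤ (x:ℝ) * Real.sqrt (a * b) := by
        calc min (x:ℝ) a * min (x:ℝ) b
            = Real.sqrt (min (x:ℝ) a * min (x:ℝ) b) * Real.sqrt (min (x:ℝ) a * min (x:ℝ) b) :=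
              (Real.mul_self_sqrt hm0).symm
          _ ≤ (x:ℝ) * Real.sqrt (a * b) :=
              mul_le_mul b2 b1 (Real.sqrt_nonneg _) hX0
      have hp0 : 0 ≤ poissonPMFReal r x := poissonPMFReal_nonneg
      have hfac : (0:ℝ) < (Nat.factorial x : ℝ) := by exact_mod_cast Nat.factorial_pos x
      have hp : poissonPMFReal r x ≤ (r:ℝ) ^ 4 / Nat.factorial x := by
        unfold poissonPMFReal
        have h1 : Real.exp (-(r:ℝ)) ≤ 1 := Real.exp_le_one_iff.mpr (by linarith)
        have h2 : (r:ℝ) ^ x ≤ (r:ℝ) ^ 4 := pow_le_pow_of_le_one hr0 hr.le hx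
        have h3 : Real.exp (-(r:ℝ)) * (r:ℝ) ^ x ≤ (r:ℝ) ^ 4 := by
          calc Real.exp (-(r:ℝ)) * (r:ℝ) ^ x ≤ 1 * (r:ℝ) ^ x :=
                mul_le_mul_of_nonneg_right h1 (by positivity)
            _ = (r:ℝ) ^ x := one_mul _
            _ ≤ (r:ℝ) ^ 4 := h2
        exact div_le_div_of_nonneg_right h3 hfac.le |>.trans_eq rfl
      have hx3 : ((x:ℝ)) ^ 3 ≤ (3:ℝ) ^ x := by exact_mod_cast cube_le_three_pow x
      rw [hfab]
      calc ((x:ℝ) * Real.sqrt (min (x:ℝ) a * min (x:ℝ) b)) ^ 2 * poissonPMFReal r x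
          = (x:ℝ) ^ 2 * (min (x:ℝ) a * min (x:ℝ) b) * poissonPMFReal r x := by
            rw [mul_pow, hsq]
        _ ≤ (x:ℝ) ^ 2 * ((x:ℝ) * Real.sqrt (a * b)) * ((r:ℝ) ^ 4 / Nat.factorial x) := by
            apply mul_le_mul (mul_le_mul_of_nonneg_left hmbound (by positivity)) hp hp0
              (by positivity)
        _ = Real.sqrt (a * b) * (r:ℝ) ^ 4 * ((x:ℝ) ^ 3 / Nat.factorial x) := by ring
        _ ≤ Real.sqrt (a * b) * (r:ℝ) ^ 4 * ((3:ℝ) ^ x / Nat.factorial x) := by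
            gcongr
    · have h0 : fab a b x = 0 := by simp [fab, hx]
      rw [h0]
      have : (0:ℝ) ≤ Real.sqrt (a * b) * (r:ℝ) ^ 4 * ((3:ℝ) ^ x / Nat.factorial x) := by positivity
      simpa using this
  have hg : Summable (fun x : ℕ => Real.sqrt (a * b) * (r:ℝ) ^ 4 * ((3:ℝ) ^ x / Nat.factorial x)) :=
    hT.mul_left _
  have hf : Summable (fun x : ℕ => fab a b x ^ 2 * poissonPMFReal r x) :=
    Summable.of_nonneg_of_le
      (fun x => mul_nonneg (by positivity) poissonPMFReal_nonneg) key hg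
  have hle : pev r (fun x => (fab a b x) ^ 2) ≤ Real.sqrt (a * b) * (r:ℝ) ^ 4 * T := by
    unfold pev
    calc (∑' x : ℕ, fab a b x ^ 2 * poissonPMFReal r x)
        ≤ ∑' x : ℕ, Real.sqrt (a * b) * (r:ℝ) ^ 4 * ((3:ℝ) ^ x / Nat.factorial x) :=
          Summable.tsum_le_tsum key hf hg
      _ = Real.sqrt (a * b) * (r:ℝ) ^ 4 * T := tsum_mul_left
  have hE0 : 0 ≤ pev r (fab a b) :=
    tsum_nonneg (fun x => mul_nonneg (fab_nonneg a b x) poissonPMFReal_nonneg)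
  nlinarith [mul_nonneg hs0 hr4, mul_nonneg hs0 hE0, mul_nonneg hT0 (mul_nonneg hs0 hE0),
    mul_nonneg hT0 (mul_nonneg hs0 hr4)]
end
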